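/- With D as above (D(x) = Σ f(ε_r)(f(m)+1)^{−r} for x = Σ ε_r (m+1)^{−r}), D is right continuous at every point of [0,1), and D is continuous at every x whose base-(m+1) expansion is infinite (i.e., x not of the form k/(m+1)^n). -/

import Mathlib

noncomputable def digitD (m : ℕ) (x : ℝ) (r : ℕ) : ℕ :=
  (⌊x * (m + 1) ^ r⌋).toNat % (m + 1)

noncomputable def cantorD (m : ℕ) (f : ℕ → ℕ) (x : ℝ) : ℝ :=
  if x = 1 then 1
  else ∑' r : ℕ, (f (digitD m x (r + 1)) : ℝ) / ((f m : ℝ) + 1) ^ (r + 1)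

namespace CantorDProofAux

/-- The floor at a coarser scale is determined by the floor at a finer scale. -/
lemma floor_det (b : ℕ) (hb : 1 ≤ b) {r N : ℕ} (hr : r ≤ N) (z : ℝ) :
    ⌊z * (b : ℝ) ^ r⌋ = ⌊(⌊z * (b : ℝ) ^ N⌋ : ℝ) / (b : ℝ) ^ (N - r)⌋ := by
  have hbR : (1 : ℝ) ≤ (b : ℝ) := by exact_mod_cast hb
  have hbp : (0 : ℝ) < (b : ℝ) ^ (N - r) := by positivity
  set J := ⌊z * (b : ℝ) ^ N⌋ with hJ
  set L := ⌊(J : ℝ) / (b : ℝ) ^ (N - r)⌋ with hL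
  have h1 : (J : ℝ) ≤ z * (b : ℝ) ^ N := Int.floor_le _
  have h2 : z * (b : ℝ) ^ N < J + 1 := Int.lt_floor_add_one _
  have hpow : (b : ℝ) ^ r * (b : ℝ) ^ (N - r) = (b : ℝ) ^ N := pow_mul_pow_sub _ hr
  have hL1 : (L : ℝ) ≤ (J : ℝ) / (b : ℝ) ^ (N - r) := Int.floor_le _
  have hL2 : (J : ℝ) / (b : ℝ) ^ (N - r) < L + 1 := Int.lt_floor_add_one _
  have hJlt : (J : ℝ) < (L + 1) * (b : ℝ) ^ (N - r) := by
    rwa [div_lt_iff₀ hbp] at hL2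
  have hJltZ : J < (L + 1) * (b : ℤ) ^ (N - r) := by exact_mod_cast hJlt
  have hJle : (J : ℝ) + 1 ≤ (L + 1) * (b : ℝ) ^ (N - r) := by
    have := Int.add_one_le_iff.mpr hJltZ
    exact_mod_cast this
  have hzr : z * (b : ℝ) ^ r = z * (b : ℝ) ^ N / (b : ℝ) ^ (N - r) := by
    rw [← hpow]; field_simp
  rw [Int.floor_eq_iff]
  constructor
  · calc (L : ℝ) ≤ (J : ℝ) / (b : ℝ) ^ (N - r) := hL1
      _ ≤ z * (b : ℝ) ^ N / (b : ℝ) ^ (N - r) := by gcongr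
      _ = z * (b : ℝ) ^ r := hzr.symm
  · calc z * (b : ℝ) ^ r = z * (b : ℝ) ^ N / (b : ℝ) ^ (N - r) := hzr
      _ < ((J : ℝ) + 1) / (b : ℝ) ^ (N - r) := by gcongr
      _ ≤ (L : ℝ) + 1 := by rw [div_le_iff₀ hbp]; linarith
  
lemma digit_agree (m N : ℕ) (x y : ℝ)
    (h : ⌊x * ((m : ℝ) + 1) ^ N⌋ = ⌊y * ((m : ℝ) + 1) ^ N⌋) {r : ℕ} (hr : r ≤ N) :
    digitD m x r = digitD m y r := by
  have hb : ((m : ℝ) + 1) = ((m + 1 : ℕ) : ℝ) := by push_cast; ring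
  unfold digitD
  rw [hb] at h ⊢
  rw [floor_det (m + 1) (by omega) hr x, floor_det (m + 1) (by omega) hr y, h]

lemma digit_le (m : ℕ) (x : ℝ) (r : ℕ) : digitD m x r ≤ m := by
  have : digitD m x r < m + 1 := Nat.mod_lt _ (Nat.succ_pos m)
  omega

lemma f_mono_le {m : ℕ} {f : ℕ → ℕ} (hf : ∀ i j, i < j → j ≤ m → f i < f j)
    {i : ℕ} (hi : i ≤ m) : f i ≤ f m := by
  rcases eq_or_lt_of_le hi with h | h
  · rw [h]
  · exact (hf i m h le_rfl).le

section Key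

variable {m : ℕ} {f : ℕ → ℕ}

lemma summable_aux (hf : ∀ i j, i < j → j ≤ m → f i < f j) (hfm : m < f m) (x : ℝ) :
    Summable (fun r : ℕ => (f (digitD m x (r + 1)) : ℝ) / ((f m : ℝ) + 1) ^ (r + 1)) := by
  set q : ℝ := (f m : ℝ) + 1 with hq
  have hq1 : (1 : ℝ) < q := by
    have : 1 ≤ f m := by omega
    have : (1 : ℝ) ≤ (f m : ℝ) := by exact_mod_cast this
    simp only [hq]; linarith
  have hq0 : (0 : ℝ) < q := by linarith
  have hr1 : (1 / q : ℝ) < 1 := by rw [div_lt_one hq0]; linarith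
  have hr0 : (0 : ℝ) ≤ 1 / q := by positivity
  have hgeo : Summable (fun r : ℕ => ((f m : ℝ) * (1 / q)) * (1 / q) ^ r) :=
    (summable_geometric_of_lt_one hr0 hr1).mul_left _
  apply Summable.of_nonneg_of_le (fun r => by positivity) (fun r => ?_) hgeo
  have hd : (f (digitD m x (r + 1)) : ℝ) ≤ (f m : ℝ) := by
    exact_mod_cast f_mono_le hf (digit_le m x (r + 1))
  calc (f (digitD m x (r + 1)) : ℝ) / q ^ (r + 1)
      ≤ (f m : ℝ) / q ^ (r + 1) := by gcongr
    _ = (f m : ℝ) * (1 / q) * (1 / q) ^ r := by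
        rw [mul_assoc, ← pow_succ', div_pow, one_pow, mul_one_div]

set_option maxHeartbeats 2000000 in
lemma key (hf : ∀ i j, i < j → j ≤ m → f i < f j) (hfm : m < f m) (N : ℕ) (x y : ℝ)
    (hx1 : x < 1) (hy1 : y < 1)
    (h : ⌊x * ((m : ℝ) + 1) ^ N⌋ = ⌊y * ((m : ℝ) + 1) ^ N⌋) :
    |cantorD m f x - cantorD m f y| ≤ (1 / ((f m : ℝ) + 1)) ^ N := by
  set q : ℝ := (f m : ℝ) + 1 with hq
  have hfm1 : (1 : ℝ) ≤ (f m : ℝ) := by exact_mod_cast (show 1 ≤ f m by omega)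
  have hq1 : (1 : ℝ) < q := by simp only [hq]; linarith
  have hq0 : (0 : ℝ) < q := by linarith
  have hr1 : (1 / q : ℝ) < 1 := by rw [div_lt_one hq0]; linarith
  have hr0 : (0 : ℝ) ≤ 1 / q := by positivity
  set a : ℕ → ℝ := fun r => (f (digitD m x (r + 1)) : ℝ) / q ^ (r + 1) with ha'
  set b : ℕ → ℝ := fun r => (f (digitD m y (r + 1)) : ℝ) / q ^ (r + 1) with hb'
  have ha : Summable a := summable_aux hf hfm x
  have hb : Summable b := summable_aux hf hfm y
  have hgen : ∀ z : ℝ, ∀ k : ℕ, (f (digitD m z (k + 1)) : ℝ) / q ^ (k + 1)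
      ≤ (f m : ℝ) * (1 / q) ^ (k + 1) := by
    intro z k
    have hd : (f (digitD m z (k + 1)) : ℝ) ≤ (f m : ℝ) := by
      exact_mod_cast f_mono_le hf (digit_le m z (k + 1))
    calc (f (digitD m z (k + 1)) : ℝ) / q ^ (k + 1) ≤ (f m : ℝ) / q ^ (k + 1) := by gcongr
      _ = (f m : ℝ) * (1 / q) ^ (k + 1) := by rw [div_pow, one_pow]; ring
  have haub : ∀ k : ℕ, a k ≤ (f m : ℝ) * (1 / q) ^ (k + 1) := fun k => hgen x k
  have hbub : ∀ k : ℕ, b k ≤ (f m : ℝ) * (1 / q) ^ (k + 1) := fun k => hgen y k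
  have hanon : ∀ k : ℕ, 0 ≤ a k := fun k => by simp only [ha']; positivity
  have hbnon : ∀ k : ℕ, 0 ≤ b k := fun k => by simp only [hb']; positivity
  rw [cantorD, if_neg hx1.ne, cantorD, if_neg hy1.ne]
  rw [← hq, ← ha', ← hb']
  rw [← Summable.tsum_sub ha hb]
  have hsub : Summable (fun r => a r - b r) := ha.sub hb
  rw [← Summable.sum_add_tsum_nat_add N hsub]
  have hzero : ∑ i ∈ Finset.range N, (a i - b i) = 0 := by
    apply Finset.sum_eq_zero
    intro i hi
    have hiN : i + 1 ≤ N := Finset.mem_range.mp hi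
    have := digit_agree m N x y h hiN
    simp [ha', hb', this]
  rw [hzero, zero_add]
  have hshift : Summable (fun i : ℕ => a (i + N) - b (i + N)) :=
    (summable_nat_add_iff N).mpr hsub
  have habs : Summable (fun i : ℕ => |a (i + N) - b (i + N)|) := hshift.abs
  have hcomp : Summable (fun i : ℕ => (f m : ℝ) * (1 / q) ^ (i + N + 1)) := by
    have : Summable (fun i : ℕ => ((f m : ℝ) * (1 / q) ^ (N + 1)) * (1 / q) ^ i) :=
      (summable_geometric_of_lt_one hr0 hr1).mul_left _
    apply this.congr
    intro i
    rw [show i + N + 1 = (N + 1) + i by ring, pow_add]; ring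
  calc |∑' i, (a (i + N) - b (i + N))| ≤ ∑' i, |a (i + N) - b (i + N)| := by
        have hnorm := norm_tsum_le_tsum_norm (f := fun i => a (i + N) - b (i + N))
          (by simpa [Real.norm_eq_abs] using habs)
        simpa [Real.norm_eq_abs] using hnorm
    _ ≤ ∑' i, (f m : ℝ) * (1 / q) ^ (i + N + 1) := by
        apply Summable.tsum_le_tsum _ habs hcomp
        intro i
        have h1 := haub (i + N)
        have h2 := hbub (i + N)
        have h3 := hanon (i + N)
        have h4 := hbnon (i + N)
        rw [abs_le]
        constructor <;> linarith
    _ = (1 / q) ^ N := by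
        have : ∀ i : ℕ, (f m : ℝ) * (1 / q) ^ (i + N + 1)
            = ((f m : ℝ) * (1 / q) ^ (N + 1)) * (1 / q) ^ i := by
          intro i; rw [show i + N + 1 = (N + 1) + i by ring, pow_add]; ring
        rw [tsum_congr this, tsum_mul_left, tsum_geometric_of_lt_one hr0 hr1]
        have h1q : (1 : ℝ) - 1 / q = (f m : ℝ) / q := by
          field_simp [hq]; linarith
        rw [h1q]
        have hfm0 : (f m : ℝ) ≠ 0 := by linarith
        rw [pow_succ]
        field_simp
  
end Key

end CantorDProofAux

open CantorDProofAux in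
theorem cantorD_continuity (m : ℕ) (hm : 1 ≤ m) (f : ℕ → ℕ)
    (hf : ∀ i j, i < j → j ≤ m → f i < f j) (hf0 : f 0 = 0) (hfm : m < f m) :
    (∀ x ∈ Set.Ico (0 : ℝ) 1, ContinuousWithinAt (cantorD m f) (Set.Icc x 1) x) ∧
      (∀ x ∈ Set.Icc (0 : ℝ) 1, (∀ k n : ℕ, x ≠ (k : ℝ) / (m + 1) ^ n) →
        ContinuousWithinAt (cantorD m f) (Set.Icc 0 1) x) := by
  have hfm1 : (1 : ℝ) ≤ (f m : ℝ) := by exact_mod_cast (show 1 ≤ f m by omega)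
  set q : ℝ := (f m : ℝ) + 1 with hq
  have hq0 : (0 : ℝ) < q := by simp only [hq]; linarith
  have hr1 : (1 / q : ℝ) < 1 := by rw [div_lt_one hq0]; simp only [hq]; linarith
  have hb1 : (1 : ℝ) < (m : ℝ) + 1 := by
    have : (1 : ℝ) ≤ (m : ℝ) := by exact_mod_cast hm
    linarith
  constructor
  · -- right continuity on [0,1)
    rintro x ⟨hx0, hx1⟩
    rw [Metric.continuousWithinAt_iff]
    intro ε hε
    obtain ⟨N, hN⟩ := exists_pow_lt_of_lt_one hε hr1
    set b : ℝ := (m : ℝ) + 1 with hbdef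
    have hbN : (0 : ℝ) < b ^ N := by positivity
    set δ0 : ℝ := ((⌊x * b ^ N⌋ : ℝ) + 1 - x * b ^ N) / b ^ N with hδ0def
    have hδ0 : 0 < δ0 := div_pos (by linarith [Int.lt_floor_add_one (x * b ^ N)]) hbN
    refine ⟨min δ0 (1 - x), lt_min hδ0 (by linarith), ?_⟩
    rintro y ⟨hyx, hy1⟩ hdist
    rw [Real.dist_eq] at hdist ⊢
    have hyx' : y - x < min δ0 (1 - x) := by
      rwa [abs_of_nonneg (by linarith)] at hdist
    have hylt1 : y < 1 := by
      have := lt_of_lt_of_le hyx' (min_le_right _ _); linarith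
    have hyδ0 : y < x + δ0 := by
      have := lt_of_lt_of_le hyx' (min_le_left _ _); linarith
    have hfloor : ⌊y * b ^ N⌋ = ⌊x * b ^ N⌋ := by
      rw [Int.floor_eq_iff]
      constructor
      · exact le_trans (Int.floor_le _) (by gcongr)
      · push_cast
        calc y * b ^ N < (x + δ0) * b ^ N := by gcongr
          _ = (⌊x * b ^ N⌋ : ℝ) + 1 := by
              rw [hδ0def]; field_simp; ring
    calc |cantorD m f y - cantorD m f x| ≤ (1 / q) ^ N :=
          key hf hfm N y x hylt1 hx1 hfloor
      _ < ε := hN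
  · -- continuity at base-(m+1)-irrational points
    rintro x ⟨hx0, hx1⟩ hirr
    have hxne1 : x ≠ 1 := by
      intro h
      apply hirr (m + 1) 1
      rw [h, pow_one]
      push_cast
      rw [div_self (by linarith)]
    have hxne0 : x ≠ 0 := by
      intro h
      apply hirr 0 0
      rw [h]; simp
    have hx0' : 0 < x := lt_of_le_of_ne hx0 (Ne.symm hxne0)
    have hx1' : x < 1 := lt_of_le_of_ne hx1 hxne1
    set b : ℝ := (m : ℝ) + 1 with hbdef
    have hnotint : ∀ N : ℕ, (⌊x * b ^ N⌋ : ℝ) < x * b ^ N := by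
      intro N
      refine lt_of_le_of_ne (Int.floor_le _) fun heq => ?_
      have hge : 0 ≤ ⌊x * b ^ N⌋ := Int.floor_nonneg.mpr (by positivity)
      apply hirr (⌊x * b ^ N⌋).toNat N
      rw [eq_div_iff (by positivity : (b : ℝ) ^ N ≠ 0)]
      rw [show (((⌊x * b ^ N⌋).toNat : ℕ) : ℝ) = ((⌊x * b ^ N⌋ : ℤ) : ℝ) by
        exact_mod_cast congrArg (fun t : ℤ => (t : ℝ)) (Int.toNat_of_nonneg hge)]
      exact heq.symm
    rw [Metric.continuousWithinAt_iff]
    intro ε hε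
    obtain ⟨N, hN⟩ := exists_pow_lt_of_lt_one hε hr1
    have hbN : (0 : ℝ) < b ^ N := by positivity
    set δ0 : ℝ := ((⌊x * b ^ N⌋ : ℝ) + 1 - x * b ^ N) / b ^ N with hδ0def
    have hδ0 : 0 < δ0 := div_pos (by linarith [Int.lt_floor_add_one (x * b ^ N)]) hbN
    set δ1 : ℝ := (x * b ^ N - (⌊x * b ^ N⌋ : ℝ)) / b ^ N with hδ1def
    have hδ1 : 0 < δ1 := div_pos (by linarith [hnotint N]) hbN
    refine ⟨min (min δ0 δ1) (1 - x), lt_min (lt_min hδ0 hδ1) (by linarith), ?_⟩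
    rintro y ⟨hy0, hy1⟩ hdist
    rw [Real.dist_eq] at hdist ⊢
    have habs := abs_lt.mp hdist
    have hylt1 : y < 1 := by
      have h1 : y - x < 1 - x :=
        lt_of_lt_of_le habs.2 (min_le_right _ _)
      linarith
    have hyδ0 : y < x + δ0 := by
      have := lt_of_lt_of_le habs.2 (le_trans (min_le_left _ _) (min_le_left _ _))
      linarith
    have hyδ1 : x - δ1 < y := by
      have hmin : δ0 ⊓ δ1 ⊓ (1 - x) ≤ δ1 := le_trans (min_le_left _ _) (min_le_right _ _)
      have h1 := habs.1
      linarith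
    have hfloor : ⌊y * b ^ N⌋ = ⌊x * b ^ N⌋ := by
      rw [Int.floor_eq_iff]
      constructor
      · calc (⌊x * b ^ N⌋ : ℝ) = (x - δ1) * b ^ N := by rw [hδ1def]; field_simp; ring
          _ ≤ y * b ^ N := mul_le_mul_of_nonneg_right hyδ1.le hbN.le
      · push_cast
        calc y * b ^ N < (x + δ0) * b ^ N := by gcongr
          _ = (⌊x * b ^ N⌋ : ℝ) + 1 := by rw [hδ0def]; field_simp; ring
    calc |cantorD m f y - cantorD m f x| ≤ (1 / q) ^ N :=
          key hf hfm N y x hylt1 hx1' hfloor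
      _ < ε := hN
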